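/- Let a < b and c < d, let R = [a,b] × [c,d] ⊂ ℝ², and let F = (M, N) be a differentiable vector field on R such that either M = 0 identically or N = 0 identically. Then there exists a point x ∈ R such that (1/area(R)) times the counterclockwise circulation of F around ∂R equals scurl F(x). -/

import Mathlib

open MeasureTheory

/-- First mean value theorem for integrals. -/
lemma intMVT_aux {c d : ℝ} (hcd : c < d) {g : ℝ → ℝ}
    (hg : ContinuousOn g (Set.Icc c d)) :
    ∃ t ∈ Set.Icc c d, ∫ s in c..d, g s = (d - c) * g t := by
  have hne : (Set.Icc c d).Nonempty := Set.nonempty_Icc.2 hcd.le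
  obtain ⟨u, hu, hmin⟩ := isCompact_Icc.exists_isMinOn hne hg
  obtain ⟨w, hw, hmax⟩ := isCompact_Icc.exists_isMaxOn hne hg
  have hgi : IntervalIntegrable g MeasureTheory.volume c d :=
    (hg.mono (by rw [Set.uIcc_of_le hcd.le])).intervalIntegrable
  have h1 : (d - c) * g u ≤ ∫ s in c..d, g s := by
    have := intervalIntegral.integral_mono_on hcd.le
      (intervalIntegrable_const (c := g u)) hgi (fun x hx => hmin hx)
    simpa using this
  have h2 : (∫ s in c..d, g s) ≤ (d - c) * g w := by
    have := intervalIntegral.integral_mono_on hcd.le hgi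
      (intervalIntegrable_const (c := g w)) (fun x hx => hmax hx)
    simpa using this
  have hdc : (0:ℝ) < d - c := by linarith
  set v : ℝ := (∫ s in c..d, g s) / (d - c) with hv
  have hv1 : g u ≤ v := by rw [hv, le_div_iff₀ hdc]; linarith
  have hv2 : v ≤ g w := by rw [hv, div_le_iff₀ hdc]; linarith
  have hvmem : v ∈ Set.uIcc (g u) (g w) :=
    Set.Icc_subset_uIcc ⟨hv1, hv2⟩
  have hsub : Set.uIcc u w ⊆ Set.Icc c d := Set.uIcc_subset_Icc hu hw
  obtain ⟨t, ht, hgt⟩ := intermediate_value_uIcc (hg.mono hsub) hvmem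
  refine ⟨t, hsub ht, ?_⟩
  rw [hgt, hv]
  field_simp

/-- MVT in the x-direction over the rectangle. -/
lemma keyX (a b c d : ℝ) (hab : a < b) (hcd : c < d) (f : ℝ × ℝ → ℝ)
    (hf : ∀ p ∈ Set.Icc a b ×ˢ Set.Icc c d, DifferentiableAt ℝ f p) :
    ∃ x ∈ Set.Icc a b ×ˢ Set.Icc c d,
      (∫ t in c..d, f (b, t)) - (∫ t in c..d, f (a, t))
        = ((b - a) * (d - c)) * fderiv ℝ f x (1, 0) := by
  have hbmem : b ∈ Set.Icc a b := Set.right_mem_Icc.2 hab.le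
  have hamem : a ∈ Set.Icc a b := Set.left_mem_Icc.2 hab.le
  have hcont : ∀ s ∈ Set.Icc a b, ContinuousOn (fun t => f (s, t)) (Set.Icc c d) := by
    intro s hs t ht
    exact (((hf (s, t) ⟨hs, ht⟩).continuousAt).comp
      ((Continuous.prodMk_right s).continuousAt)).continuousWithinAt
  have hg : ContinuousOn (fun t => f (b, t) - f (a, t)) (Set.Icc c d) :=
    (hcont b hbmem).sub (hcont a hamem)
  obtain ⟨t₀, ht₀, hint⟩ := intMVT_aux hcd hg
  have hib : IntervalIntegrable (fun t => f (b, t)) MeasureTheory.volume c d :=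
    ((hcont b hbmem).mono (by rw [Set.uIcc_of_le hcd.le])).intervalIntegrable
  have hia : IntervalIntegrable (fun t => f (a, t)) MeasureTheory.volume c d :=
    ((hcont a hamem).mono (by rw [Set.uIcc_of_le hcd.le])).intervalIntegrable
  rw [intervalIntegral.integral_sub hib hia] at hint
  -- MVT in the first variable at height t₀
  have hderiv : ∀ x ∈ Set.Icc a b,
      HasDerivAt (fun s => f (s, t₀)) (fderiv ℝ f (x, t₀) (1, 0)) x := by
    intro x hx
    have hF := (hf (x, t₀) ⟨hx, ht₀⟩).hasFDerivAt
    have hline : HasDerivAt (fun s : ℝ => ((s : ℝ), t₀)) ((1 : ℝ), (0 : ℝ)) x :=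
      HasDerivAt.prodMk (hasDerivAt_id x) (hasDerivAt_const x t₀)
    exact hF.comp_hasDerivAt x hline
  have hc : ContinuousOn (fun s => f (s, t₀)) (Set.Icc a b) := fun x hx =>
    ((hderiv x hx).continuousAt).continuousWithinAt
  obtain ⟨ξ, hξ, hslope⟩ := exists_hasDerivAt_eq_slope (fun s => f (s, t₀))
    (fun x => fderiv ℝ f (x, t₀) (1, 0)) hab hc
    (fun x hx => hderiv x (Set.Ioo_subset_Icc_self hx))
  refine ⟨(ξ, t₀), ⟨Set.Ioo_subset_Icc_self hξ, ht₀⟩, ?_⟩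
  have hba : (0:ℝ) < b - a := by linarith
  have : f (b, t₀) - f (a, t₀) = (b - a) * fderiv ℝ f (ξ, t₀) (1, 0) := by
    rw [hslope]; field_simp
  rw [hint, this]; ring

/-- MVT in the y-direction over the rectangle. -/
lemma keyY (a b c d : ℝ) (hab : a < b) (hcd : c < d) (f : ℝ × ℝ → ℝ)
    (hf : ∀ p ∈ Set.Icc a b ×ˢ Set.Icc c d, DifferentiableAt ℝ f p) :
    ∃ x ∈ Set.Icc a b ×ˢ Set.Icc c d,
      (∫ t in a..b, f (t, d)) - (∫ t in a..b, f (t, c))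
        = ((b - a) * (d - c)) * fderiv ℝ f x (0, 1) := by
  have hdmem : d ∈ Set.Icc c d := Set.right_mem_Icc.2 hcd.le
  have hcmem : c ∈ Set.Icc c d := Set.left_mem_Icc.2 hcd.le
  have hcont : ∀ s ∈ Set.Icc c d, ContinuousOn (fun t => f (t, s)) (Set.Icc a b) := by
    intro s hs t ht
    have hline : ContinuousAt (fun x : ℝ => ((x, s) : ℝ × ℝ)) t :=
      (continuous_id.prodMk continuous_const).continuousAt
    have hca : ContinuousAt (fun x : ℝ => f (x, s)) t :=
      ContinuousAt.comp (g := f) (f := fun x : ℝ => ((x, s) : ℝ × ℝ)) (x := t)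
        (by simpa using (hf (t, s) ⟨ht, hs⟩).continuousAt) hline
    exact hca.continuousWithinAt
  have hg : ContinuousOn (fun t => f (t, d) - f (t, c)) (Set.Icc a b) :=
    (hcont d hdmem).sub (hcont c hcmem)
  obtain ⟨t₀, ht₀, hint⟩ := intMVT_aux hab hg
  have hib : IntervalIntegrable (fun t => f (t, d)) MeasureTheory.volume a b :=
    ((hcont d hdmem).mono (by rw [Set.uIcc_of_le hab.le])).intervalIntegrable
  have hia : IntervalIntegrable (fun t => f (t, c)) MeasureTheory.volume a b :=
    ((hcont c hcmem).mono (by rw [Set.uIcc_of_le hab.le])).intervalIntegrable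
  rw [intervalIntegral.integral_sub hib hia] at hint
  have hderiv : ∀ y ∈ Set.Icc c d,
      HasDerivAt (fun s => f (t₀, s)) (fderiv ℝ f (t₀, y) (0, 1)) y := by
    intro y hy
    have hF := (hf (t₀, y) ⟨ht₀, hy⟩).hasFDerivAt
    have hline : HasDerivAt (fun s : ℝ => (t₀, (s : ℝ))) ((0 : ℝ), (1 : ℝ)) y :=
      HasDerivAt.prodMk (hasDerivAt_const y t₀) (hasDerivAt_id y)
    exact hF.comp_hasDerivAt y hline
  have hc : ContinuousOn (fun s => f (t₀, s)) (Set.Icc c d) := fun y hy =>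
    ((hderiv y hy).continuousAt).continuousWithinAt
  obtain ⟨ξ, hξ, hslope⟩ := exists_hasDerivAt_eq_slope (fun s => f (t₀, s))
    (fun y => fderiv ℝ f (t₀, y) (0, 1)) hcd hc
    (fun y hy => hderiv y (Set.Ioo_subset_Icc_self hy))
  refine ⟨(t₀, ξ), ⟨ht₀, Set.Ioo_subset_Icc_self hξ⟩, ?_⟩
  have hdc : (0:ℝ) < d - c := by linarith
  have : f (t₀, d) - f (t₀, c) = (d - c) * fderiv ℝ f (t₀, ξ) (0, 1) := by
    rw [hslope]; field_simp
  rw [hint, this]; ring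

/-- If `F = (M, N)` is a differentiable vector field on (a neighborhood of) the
rectangle `R = [a,b] × [c,d]` (with `a < b`, `c < d`) such that `M = 0`
identically or `N = 0` identically, then there is a point `x ∈ R` such that
`(1/area R)` times the counterclockwise circulation of `F` around `∂R` equals
`scurl F (x) = ∂N/∂x (x) − ∂M/∂y (x)`. -/
theorem circulation_eq_scurl_at_point
    (a b c d : ℝ) (hab : a < b) (hcd : c < d)
    (M N : ℝ × ℝ → ℝ)
    (hM : ∀ p ∈ Set.Icc a b ×ˢ Set.Icc c d, DifferentiableAt ℝ M p)
    (hN : ∀ p ∈ Set.Icc a b ×ˢ Set.Icc c d, DifferentiableAt ℝ N p)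
    (hzero : (∀ p, M p = 0) ∨ (∀ p, N p = 0)) :
    ∃ x ∈ Set.Icc a b ×ˢ Set.Icc c d,
      (1 / ((b - a) * (d - c))) *
          ((∫ t in a..b, M (t, c)) + (∫ t in c..d, N (b, t))
            - (∫ t in a..b, M (t, d)) - (∫ t in c..d, N (a, t)))
        = fderiv ℝ N x (1, 0) - fderiv ℝ M x (0, 1) := by
  have hA : ((b - a) * (d - c)) ≠ 0 := by
    have h1 : (0:ℝ) < b - a := by linarith
    have h2 : (0:ℝ) < d - c := by linarith
    positivity
  rcases hzero with hM0 | hN0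
  · -- M = 0
    have hMfun : M = fun _ => (0:ℝ) := funext hM0
    subst hMfun
    obtain ⟨x, hx, hkey⟩ := keyX a b c d hab hcd N hN
    refine ⟨x, hx, ?_⟩
    simp only [fderiv_fun_const, Pi.zero_apply, ContinuousLinearMap.zero_apply,
      intervalIntegral.integral_zero]
    rw [eq_comm, ← sub_zero (fderiv ℝ N x (1,0))] at hkey ⊢
    field_simp
    rw [eq_div_iff hA]
    linarith [hkey]
  · -- N = 0
    have hNfun : N = fun _ => (0:ℝ) := funext hN0
    subst hNfun
    obtain ⟨x, hx, hkey⟩ := keyY a b c d hab hcd M hM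
    refine ⟨x, hx, ?_⟩
    simp only [fderiv_fun_const, Pi.zero_apply, ContinuousLinearMap.zero_apply,
      intervalIntegral.integral_zero]
    field_simp
    rw [div_eq_iff hA]
    linarith [hkey]
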